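/- arXiv:2303.04752 — 2 statements merged into one kernel-verified Lean document; each statement's English description precedes it below -/
import Mathlib

section
/- Let i ≥ 1 be an integer, A ≥ 8 a real number, and x a real number with x ≥ A^{1/3}·√i. Then x^{2i−2}·e^{−x²} ≤ (A^{1/3}·√i)^{2i−2} · e^{−A^{2/3}·i} · e^{−4(x − A^{1/3}·√i)}. -/
/-- Pointwise bound on the generalized Gamma density: for `i ≥ 1`, `A ≥ 8` and
`x ≥ A^{1/3} √i`, one has `x^{2i-2} e^{-x²} ≤ (A^{1/3} √i)^{2i-2} e^{-A^{2/3} i} e^{-4(x - A^{1/3}√i)}`. -/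
theorem density_tail_bound (i : ℕ) (hi : 1 ≤ i) (A x : ℝ) (hA : 8 ≤ A)
    (hx : A ^ ((1 : ℝ) / 3) * Real.sqrt i ≤ x) :
    x ^ (2 * i - 2) * Real.exp (-x ^ 2) ≤
      (A ^ ((1 : ℝ) / 3) * Real.sqrt i) ^ (2 * i - 2) * Real.exp (-(A ^ ((2 : ℝ) / 3) * i)) *
        Real.exp (-(4 * (x - A ^ ((1 : ℝ) / 3) * Real.sqrt i))) := by
  set c : ℝ := A ^ ((1 : ℝ) / 3) * Real.sqrt i with hc
  set n : ℕ := 2 * i - 2 with hn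
  have hA0 : (0 : ℝ) < A := by linarith
  have h813 : ((8 : ℝ)) ^ ((1 : ℝ) / 3) = 2 := by
    rw [show (8 : ℝ) = 2 ^ (3 : ℕ) by norm_num, ← Real.rpow_natCast 2 3,
      ← Real.rpow_mul (by norm_num)]
    norm_num
  have h823 : ((8 : ℝ)) ^ ((2 : ℝ) / 3) = 4 := by
    rw [show (8 : ℝ) = 2 ^ (3 : ℕ) by norm_num, ← Real.rpow_natCast 2 3,
      ← Real.rpow_mul (by norm_num)]
    norm_num
  have hA13 : (2 : ℝ) ≤ A ^ ((1 : ℝ) / 3) := by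
    rw [← h813]; exact Real.rpow_le_rpow (by norm_num) hA (by norm_num)
  have hA23 : (4 : ℝ) ≤ A ^ ((2 : ℝ) / 3) := by
    rw [← h823]; exact Real.rpow_le_rpow (by norm_num) hA (by norm_num)
  have hsi : (1 : ℝ) ≤ Real.sqrt i := by
    rw [show (1 : ℝ) = Real.sqrt 1 by simp]
    exact Real.sqrt_le_sqrt (by exact_mod_cast hi)
  have hc2 : (2 : ℝ) ≤ c := by
    calc (2 : ℝ) = 2 * 1 := by ring
    _ ≤ A ^ ((1 : ℝ) / 3) * Real.sqrt i := by
        apply mul_le_mul hA13 hsi (by norm_num) (by linarith)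
    _ = c := rfl
  have hc0 : (0 : ℝ) < c := by linarith
  have hcsq : c ^ 2 = A ^ ((2 : ℝ) / 3) * i := by
    rw [hc, mul_pow, Real.sq_sqrt (by positivity), ← Real.rpow_natCast (A ^ ((1:ℝ)/3)) 2,
      ← Real.rpow_mul (le_of_lt hA0)]
    norm_num
  have hci : 4 * (i : ℝ) ≤ c ^ 2 := by
    rw [hcsq]
    have : (0:ℝ) ≤ (i:ℝ) := by positivity
    nlinarith
  have hnr : (n : ℝ) = 2 * (i : ℝ) - 2 := by
    have h2 : 2 ≤ 2 * i := by omega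
    rw [hn]; push_cast [Nat.cast_sub h2]; ring
  -- step 1: x^n ≤ c^n * exp(n*(x-c)/c)
  have hstep1 : x ^ n ≤ c ^ n * Real.exp ((n : ℝ) * ((x - c) / c)) := by
    have hxc : x / c ≤ Real.exp ((x - c) / c) := by
      have h := Real.add_one_le_exp ((x - c) / c)
      have : (x - c) / c + 1 = x / c := by field_simp; ring
      linarith [this ▸ h]
    have hxc0 : 0 ≤ x / c := div_nonneg (by linarith) hc0.le
    calc x ^ n = c ^ n * (x / c) ^ n := by
          rw [div_pow, mul_div_assoc', mul_div_cancel_left₀ _ (pow_ne_zero n hc0.ne')]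
      _ ≤ c ^ n * Real.exp ((x - c) / c) ^ n := by
          apply mul_le_mul_of_nonneg_left (pow_le_pow_left₀ hxc0 hxc n) (by positivity)
      _ = c ^ n * Real.exp ((n : ℝ) * ((x - c) / c)) := by
          rw [← Real.exp_nat_mul]
  -- step 2: exponent inequality
  have hkey : (n : ℝ) * ((x - c) / c) - x ^ 2 ≤ -c ^ 2 - 4 * (x - c) := by
    have hn2 : (n : ℝ) ≤ 2 * c ^ 2 - 4 * c := by
      rw [hnr]; nlinarith [hci, hc2]
    have hndiv : (n : ℝ) / c ≤ x + c - 4 := by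
      rw [div_le_iff₀ hc0]
      nlinarith [hn2, hx, hc0]
    have hxc0 : 0 ≤ x - c := by linarith
    have : (n : ℝ) * ((x - c) / c) ≤ (x + c - 4) * (x - c) := by
      calc (n : ℝ) * ((x - c) / c) = ((n : ℝ) / c) * (x - c) := by ring
        _ ≤ (x + c - 4) * (x - c) := mul_le_mul_of_nonneg_right hndiv hxc0
    nlinarith [this]
  calc x ^ n * Real.exp (-x ^ 2)
      ≤ (c ^ n * Real.exp ((n : ℝ) * ((x - c) / c))) * Real.exp (-x ^ 2) := by
        apply mul_le_mul_of_nonneg_right hstep1 (Real.exp_pos _).le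
    _ = c ^ n * Real.exp ((n : ℝ) * ((x - c) / c) - x ^ 2) := by
        rw [mul_assoc, ← Real.exp_add]; ring_nf
    _ ≤ c ^ n * Real.exp (-c ^ 2 - 4 * (x - c)) := by
        apply mul_le_mul_of_nonneg_left (Real.exp_le_exp.mpr hkey) (by positivity)
    _ = c ^ n * Real.exp (-(A ^ ((2 : ℝ) / 3) * i)) * Real.exp (-(4 * (x - c))) := by
        rw [mul_assoc, ← Real.exp_add, ← hcsq]; ring_nf
end

section
/- E[X] = (m/(2(k−1))) · Γ(k)/Γ((2k−1)/2). -/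
open MeasureTheory ProbabilityTheory Real Filter
open scoped ENNReal NNReal

/-- Density of the Beta distribution `β(u,v)` with respect to Lebesgue measure. -/
noncomputable def betaPDFReal (u v x : ℝ) : ℝ :=
  if 0 < x ∧ x < 1 then
    Real.Gamma (u + v) / (Real.Gamma u * Real.Gamma v) * x ^ (u - 1) * (1 - x) ^ (v - 1)
  else 0

/-- The Beta distribution `β(u,v)` on `ℝ`. -/
noncomputable def betaMeasure (u v : ℝ) : Measure ℝ :=
  volume.withDensity fun x => ENNReal.ofReal (_root_.betaPDFReal u v x)

/-- Density of the generalized Gamma distribution `GG(u,v)` w.r.t. Lebesgue measure. -/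
noncomputable def genGammaPDFReal (u v x : ℝ) : ℝ :=
  if 0 < x then v / Real.Gamma (u / v) * x ^ (u - 1) * Real.exp (-(x ^ v)) else 0

/-- The generalized Gamma distribution `GG(u,v)` on `ℝ`. -/
noncomputable def genGammaMeasure (u v : ℝ) : Measure ℝ :=
  volume.withDensity fun x => ENNReal.ofReal (genGammaPDFReal u v x)

lemma integral_withDensity_ofReal {f g : ℝ → ℝ} (hf : Measurable f) (hfpos : ∀ x, 0 ≤ f x) :
    ∫ x, g x ∂(volume.withDensity fun x => ENNReal.ofReal (f x)) = ∫ x, f x * g x := by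
  have h : (fun x => ENNReal.ofReal (f x)) = fun x => ((f x).toNNReal : ℝ≥0∞) := rfl
  rw [h, integral_withDensity_eq_integral_smul hf.real_toNNReal g]
  congr 1
  ext x
  simp [NNReal.smul_def, Real.coe_toNNReal _ (hfpos x)]

lemma real_betaIntegral {a b : ℝ} (ha : 0 < a) (hb : 0 < b) :
    ∫ x in (0:ℝ)..1, x ^ (a - 1) * (1 - x) ^ (b - 1)
      = Real.Gamma a * Real.Gamma b / Real.Gamma (a + b) := by
  have hab : Real.Gamma (a + b) ≠ 0 := (Real.Gamma_pos_of_pos (by linarith)).ne'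
  have key := Complex.Gamma_mul_Gamma_eq_betaIntegral (s := (a : ℂ)) (t := (b : ℂ))
    (by simpa using ha) (by simpa using hb)
  have hbeta : Complex.betaIntegral a b
      = ((∫ x in (0:ℝ)..1, x ^ (a - 1) * (1 - x) ^ (b - 1) : ℝ) : ℂ) := by
    rw [Complex.betaIntegral, ← intervalIntegral.integral_ofReal]
    refine intervalIntegral.integral_congr fun x hx => ?_
    rw [Set.uIcc_of_le (by norm_num : (0:ℝ) ≤ 1)] at hx
    rw [Complex.ofReal_mul, Complex.ofReal_cpow hx.1,
      Complex.ofReal_cpow (by linarith [hx.2] : (0:ℝ) ≤ 1 - x)]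
    push_cast
    ring
  rw [hbeta, show ((a : ℂ) + b) = ((a + b : ℝ) : ℂ) by push_cast; ring,
    Complex.Gamma_ofReal, Complex.Gamma_ofReal, Complex.Gamma_ofReal,
    ← Complex.ofReal_mul, ← Complex.ofReal_mul] at key
  have h := Complex.ofReal_inj.mp key
  field_simp
  linarith [h]

lemma real_betaIntegral_Ioo {a b : ℝ} (ha : 0 < a) (hb : 0 < b) :
    ∫ x in Set.Ioo (0:ℝ) 1, x ^ (a - 1) * (1 - x) ^ (b - 1)
      = Real.Gamma a * Real.Gamma b / Real.Gamma (a + b) := by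
  rw [← real_betaIntegral ha hb, intervalIntegral.integral_of_le zero_le_one]
  exact setIntegral_congr_set Ioo_ae_eq_Ioc

lemma beta_one_sub_mean {a b : ℝ} (ha : 0 < a) (hb : 0 < b) :
    ∫ x, (1 - x) ∂_root_.betaMeasure a b = b / (a + b) := by
  have hmeas : Measurable (_root_.betaPDFReal a b) := by
    unfold _root_.betaPDFReal
    apply Measurable.ite
    · exact measurableSet_Ioi.inter measurableSet_Iio
    · fun_prop
    · exact measurable_const
  have hpos : ∀ x, 0 ≤ _root_.betaPDFReal a b x := by
    intro x
    unfold _root_.betaPDFReal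
    split_ifs with h
    · have h1 := Real.Gamma_pos_of_pos ha
      have h2 := Real.Gamma_pos_of_pos hb
      have h3 := Real.Gamma_pos_of_pos (show 0 < a + b by linarith)
      have hx0 : (0:ℝ) ≤ x := h.1.le
      have hx1 : (0:ℝ) ≤ 1 - x := by linarith [h.2]
      have : 0 ≤ Real.Gamma (a + b) / (Real.Gamma a * Real.Gamma b) := by positivity
      exact mul_nonneg (mul_nonneg this (Real.rpow_nonneg hx0 _)) (Real.rpow_nonneg hx1 _)
    · exact le_refl 0
  rw [_root_.betaMeasure, integral_withDensity_ofReal hmeas hpos]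
  have hind : (fun x => _root_.betaPDFReal a b x * (1 - x))
      = Set.indicator (Set.Ioo (0:ℝ) 1)
        (fun x => Real.Gamma (a + b) / (Real.Gamma a * Real.Gamma b)
          * (x ^ (a - 1) * (1 - x) ^ (b + 1 - 1))) := by
    ext x
    rw [Set.indicator_apply]
    unfold _root_.betaPDFReal
    by_cases h : x ∈ Set.Ioo (0:ℝ) 1
    · rw [if_pos h, if_pos ⟨h.1, h.2⟩]
      have h1x : (0:ℝ) < 1 - x := by linarith [h.2]
      have hr : (1 - x) ^ (b + 1 - 1) = (1 - x) ^ (b - 1) * (1 - x) := by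
        rw [show b + 1 - 1 = (b - 1) + 1 by ring, Real.rpow_add_one h1x.ne']
      rw [hr]
      ring
    · rw [if_neg h, if_neg (by simpa [Set.mem_Ioo] using h)]
      ring
  rw [hind, integral_indicator (measurableSet_Ioo), integral_const_mul,
    show b + 1 - 1 = (b + 1) - 1 by ring,
    real_betaIntegral_Ioo ha (by linarith : (0:ℝ) < b + 1)]
  have hga := (Real.Gamma_pos_of_pos ha).ne'
  have hgb := (Real.Gamma_pos_of_pos hb).ne'
  have hgab := (Real.Gamma_pos_of_pos (show 0 < a + b by linarith)).ne'
  rw [show a + (b + 1) = (a + b) + 1 by ring, Real.Gamma_add_one (by positivity : (a:ℝ) + b ≠ 0),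
    Real.Gamma_add_one hb.ne']
  field_simp

lemma genGamma_mean {u v : ℝ} (hu : 0 < u) (hv : 0 < v) :
    ∫ x, x ∂genGammaMeasure u v = Real.Gamma ((u + 1) / v) / Real.Gamma (u / v) := by
  have hmeas : Measurable (genGammaPDFReal u v) := by
    unfold genGammaPDFReal
    apply Measurable.ite measurableSet_Ioi _ measurable_const
    fun_prop
  have hpos : ∀ x, 0 ≤ genGammaPDFReal u v x := by
    intro x
    unfold genGammaPDFReal
    split_ifs with h
    · have := Real.Gamma_pos_of_pos (div_pos hu hv)
      positivity
    · exact le_refl 0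
  rw [genGammaMeasure, integral_withDensity_ofReal hmeas hpos]
  have hind : (fun x => genGammaPDFReal u v x * x)
      = Set.indicator (Set.Ioi (0:ℝ))
        (fun x => v / Real.Gamma (u / v) * (x ^ u * Real.exp (-(x ^ v)))) := by
    ext x
    unfold genGammaPDFReal
    by_cases h : (0:ℝ) < x
    · rw [Set.indicator_of_mem (Set.mem_Ioi.mpr h), if_pos h]
      have hr : x ^ u = x ^ (u - 1) * x := by
        rw [show u = (u - 1) + 1 by ring]
        rw [Real.rpow_add_one h.ne']
        ring_nf
      rw [hr]
      ring
    · rw [Set.indicator_of_notMem (by simpa using h), if_neg h]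
      ring
  rw [hind, integral_indicator measurableSet_Ioi, integral_const_mul,
    integral_rpow_mul_exp_neg_rpow hv (by linarith : (-1:ℝ) < u)]
  have hg := (Real.Gamma_pos_of_pos (div_pos hu hv)).ne'
  field_simp

/-- First moment of `X = (1-B)Z` where `B ~ β(2(k-1)-m, m)` and `Z ~ GG(2k-1, 2)` are
independent: `E[X] = (m/(2(k-1))) * Γ(k)/Γ((2k-1)/2)`. -/
theorem limit_degree_first_moment {Ω : Type*} [MeasurableSpace Ω] (P : Measure Ω) [IsProbabilityMeasure P]
    (k m : ℕ) (hk : 2 ≤ k) (hm1 : 1 ≤ m) (hm2 : m ≤ 2 * k - 3)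
    (B Z : Ω → ℝ) (hB : Measurable B) (hZ : Measurable Z) (hindep : IndepFun B Z P)
    (hlawB : P.map B = _root_.betaMeasure (2 * ((k : ℝ) - 1) - m) m)
    (hlawZ : P.map Z = genGammaMeasure (2 * (k : ℝ) - 1) 2) :
    ∫ ω, (1 - B ω) * Z ω ∂P
      = (m : ℝ) / (2 * ((k : ℝ) - 1)) * (Real.Gamma k / Real.Gamma ((2 * (k : ℝ) - 1) / 2)) := by
  have hk' : (2:ℝ) ≤ (k:ℝ) := by exact_mod_cast hk
  have hm2' : (m:ℝ) ≤ 2 * (k:ℝ) - 3 := by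
    have h3 : 3 ≤ 2 * k := by omega
    have h := (Nat.cast_le (α := ℝ)).mpr hm2
    rw [Nat.cast_sub h3] at h
    push_cast at h
    linarith
  have hm1' : (1:ℝ) ≤ (m:ℝ) := by exact_mod_cast hm1
  set a : ℝ := 2 * ((k : ℝ) - 1) - m with ha_def
  have ha : 0 < a := by simp only [ha_def]; linarith
  have hb : 0 < (m:ℝ) := by linarith
  have h1 : IndepFun (fun ω => 1 - B ω) Z P :=
    hindep.comp (measurable_const.sub measurable_id) measurable_id
  have hstep : ∫ ω, (1 - B ω) * Z ω ∂P = (∫ ω, (1 - B ω) ∂P) * ∫ ω, Z ω ∂P :=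
    h1.integral_fun_mul_eq_mul_integral ((measurable_const.sub hB).aestronglyMeasurable) hZ.aestronglyMeasurable
  have hEB : ∫ ω, (1 - B ω) ∂P = (m:ℝ) / (2 * ((k:ℝ) - 1)) := by
    have : ∫ ω, (1 - B ω) ∂P = ∫ x, (1 - x) ∂(P.map B) := by
      rw [integral_map hB.aemeasurable]
      exact (measurable_const.sub measurable_id).aestronglyMeasurable
    rw [this, hlawB, beta_one_sub_mean ha hb]
    congr 1
    simp only [ha_def]
    ring
  have hEZ : ∫ ω, Z ω ∂P = Real.Gamma k / Real.Gamma ((2 * (k:ℝ) - 1) / 2) := by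
    have : ∫ ω, Z ω ∂P = ∫ x, x ∂(P.map Z) := by
      rw [integral_map hZ.aemeasurable]
      exact measurable_id.aestronglyMeasurable
    rw [this, hlawZ, genGamma_mean (by linarith : (0:ℝ) < 2 * (k:ℝ) - 1) two_pos]
    congr 2
    ring
  rw [hstep, hEB, hEZ]
end
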